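/- Let X, Y ⊆ ℝ^d be finite, Q_X ⊆ X, Q_Y ⊆ Y with Q_X ∪ Q_Y nonempty, and let Q̂ := Q_X×{0} ∪ Q_Y×{1} ⊆ ℝ^{d+1}. If s ∈ ⋂_{q∈Q̂} vor(q, X̂∪Ŷ), then the projection z := π(s) ∈ ℝ^d (dropping the last coordinate) satisfies z ∈ ⋂_{x∈Q_X} vor(x,X) ∩ ⋂_{y∈Q_Y} vor(y,Y). -/

import Mathlib

noncomputable section

def vor {α : Type*} [PseudoMetricSpace α] (x : α) (S : Set α) : Set α :=
  {z | ∀ x' ∈ S, dist z x ≤ dist z x'}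

def lift {d : ℕ} (x : EuclideanSpace ℝ (Fin d)) (t : ℝ) :
    WithLp 2 (EuclideanSpace ℝ (Fin d) × ℝ) :=
  (WithLp.equiv 2 (EuclideanSpace ℝ (Fin d) × ℝ)).symm (x, t)

def proj {d : ℕ} (s : WithLp 2 (EuclideanSpace ℝ (Fin d) × ℝ)) :
    EuclideanSpace ℝ (Fin d) :=
  ((WithLp.equiv 2 (EuclideanSpace ℝ (Fin d) × ℝ)) s).1

def liftedUnion {d : ℕ} (X Y : Finset (EuclideanSpace ℝ (Fin d))) :
    Set (WithLp 2 (EuclideanSpace ℝ (Fin d) × ℝ)) :=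
  ((fun x => lift x 0) '' (X : Set (EuclideanSpace ℝ (Fin d)))) ∪
    ((fun y => lift y 1) '' (Y : Set (EuclideanSpace ℝ (Fin d))))

lemma key {d : ℕ} (s : WithLp 2 (EuclideanSpace ℝ (Fin d) × ℝ))
    (a b : EuclideanSpace ℝ (Fin d)) (t : ℝ)
    (h : dist s (lift a t) ≤ dist s (lift b t)) :
    dist (proj s) a ≤ dist (proj s) b := by
  rw [WithLp.prod_dist_eq_of_L2, WithLp.prod_dist_eq_of_L2] at h
  have ha1 : (lift a t).fst = a := rfl
  have hb1 : (lift b t).fst = b := rfl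
  have ha2 : (lift a t).snd = t := rfl
  have hb2 : (lift b t).snd = t := rfl
  rw [ha1, hb1, ha2, hb2] at h
  have h2 : dist s.fst a ^ 2 ≤ dist s.fst b ^ 2 := by
    have := (Real.sqrt_le_sqrt_iff (by positivity)).mp h
    linarith
  have h3 := Real.sqrt_le_sqrt h2
  rw [Real.sqrt_sq dist_nonneg, Real.sqrt_sq dist_nonneg] at h3
  exact h3

theorem proj_mem_voronoi_inter (d : ℕ) (X Y QX QY : Finset (EuclideanSpace ℝ (Fin d)))
    (hQX : QX ⊆ X) (hQY : QY ⊆ Y) (hne : ((QX : Set (EuclideanSpace ℝ (Fin d))) ∪ (QY : Set (EuclideanSpace ℝ (Fin d)))).Nonempty)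
    (s : WithLp 2 (EuclideanSpace ℝ (Fin d) × ℝ))
    (hs : s ∈ ⋂ q ∈ ((fun x => lift x 0) '' (QX : Set (EuclideanSpace ℝ (Fin d)))) ∪
        ((fun y => lift y 1) '' (QY : Set (EuclideanSpace ℝ (Fin d)))),
      vor q (liftedUnion X Y)) :
    proj s ∈ (⋂ x ∈ QX, vor x (X : Set (EuclideanSpace ℝ (Fin d)))) ∩
      ⋂ y ∈ QY, vor y (Y : Set (EuclideanSpace ℝ (Fin d))) := by
  simp only [Set.mem_iInter, Set.mem_inter_iff] at *
  constructor
  · intro q hq x' hx'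
    have hsq := hs (lift q 0) (Or.inl ⟨q, hq, rfl⟩)
    exact key s q x' 0 (hsq (lift x' 0) (Or.inl ⟨x', hx', rfl⟩))
  · intro q hq y' hy'
    have hsq := hs (lift q 1) (Or.inr ⟨q, hq, rfl⟩)
    exact key s q y' 1 (hsq (lift y' 1) (Or.inr ⟨y', hy', rfl⟩))
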